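/- The subgroup of Aut(F_n) generated by the n−1 elementary palindromic automorphisms (a_i||a_n), for i = 1, ..., n−1, is a free abelian group of rank n−1. -/

import Mathlib

open FreeGroup Finset

section Aux

lemma mulaut_ext {n : ℕ} {f g : MulAut (FreeGroup (Fin n))}
    (h : ∀ x, f (FreeGroup.of x) = g (FreeGroup.of x)) : f = g :=
  MulEquiv.toMonoidHom_injective (FreeGroup.ext_hom _ _ h)

variable {m : ℕ} {P : Fin m → MulAut (FreeGroup (Fin (m + 1)))}
  (hP : ∀ i : Fin m,
      P i (FreeGroup.of (Fin.castSucc i)) =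
        FreeGroup.of (Fin.last m) * FreeGroup.of (Fin.castSucc i) * FreeGroup.of (Fin.last m))
  (hP' : ∀ (i : Fin m) (k : Fin (m + 1)), k ≠ Fin.castSucc i →
      P i (FreeGroup.of k) = FreeGroup.of k)

include hP'

lemma P_last (i : Fin m) : P i (FreeGroup.of (Fin.last m)) = FreeGroup.of (Fin.last m) :=
  hP' i _ (Fin.castSucc_lt_last i).ne'

lemma Pinv_fix (i : Fin m) (x : Fin (m + 1)) (hx : x ≠ Fin.castSucc i) :
    (P i)⁻¹ (FreeGroup.of x) = FreeGroup.of x := by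
  apply (P i).injective
  rw [MulAut.apply_inv_self, hP' i x hx]

include hP

lemma Pinv_conj (i : Fin m) :
    (P i)⁻¹ (FreeGroup.of (Fin.castSucc i)) =
      (FreeGroup.of (Fin.last m))⁻¹ * FreeGroup.of (Fin.castSucc i) *
        (FreeGroup.of (Fin.last m))⁻¹ := by
  apply (P i).injective
  rw [MulAut.apply_inv_self]
  rw [_root_.map_mul, _root_.map_mul, _root_.map_inv, hP i, P_last hP' i]
  group

lemma P_comm (i j : Fin m) : Commute (P i) (P j) := by
  rcases eq_or_ne i j with rfl | hij
  · exact Commute.refl _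
  apply mulaut_ext
  intro x
  rw [MulAut.mul_apply, MulAut.mul_apply]
  rcases eq_or_ne x (Fin.castSucc i) with rfl | hxi
  · have e1 : P j (FreeGroup.of (Fin.castSucc i)) = FreeGroup.of (Fin.castSucc i) :=
      hP' j _ (by simpa [Fin.castSucc_inj] using hij)
    rw [e1, hP i, _root_.map_mul, _root_.map_mul, P_last hP' j, e1]
  rcases eq_or_ne x (Fin.castSucc j) with rfl | hxj
  · have e1 : P i (FreeGroup.of (Fin.castSucc j)) = FreeGroup.of (Fin.castSucc j) :=
      hP' i _ (by simpa [Fin.castSucc_inj] using hij.symm)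
    rw [e1, hP j, _root_.map_mul, _root_.map_mul, P_last hP' i, e1]
  · rw [hP' j x hxj, hP' i x hxi, hP' j x hxj]

lemma Pzpow_fix (i : Fin m) (k : ℤ) (x : Fin (m + 1)) (hx : x ≠ Fin.castSucc i) :
    ((P i) ^ k) (FreeGroup.of x) = FreeGroup.of x := by
  induction k using Int.induction_on with
  | zero => simp
  | succ n ih =>
      have h1 : (P i) ^ ((n : ℤ) + 1) = (P i) ^ (n : ℤ) * P i := by
        rw [zpow_add_one]
      rw [h1, MulAut.mul_apply, hP' i x hx, ih]
  | pred n ih =>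
      have h1 : (P i) ^ (-(n : ℤ) - 1) = (P i) ^ (-(n : ℤ)) * (P i)⁻¹ := by
        rw [zpow_sub_one]
      rw [h1, MulAut.mul_apply, Pinv_fix hP' i x hx, ih]

lemma Pzpow_conj (i : Fin m) (k : ℤ) :
    ((P i) ^ k) (FreeGroup.of (Fin.castSucc i)) =
      (FreeGroup.of (Fin.last m)) ^ k * FreeGroup.of (Fin.castSucc i) *
        (FreeGroup.of (Fin.last m)) ^ k := by
  induction k using Int.induction_on with
  | zero => simp
  | succ n ih =>
      have h1 : (P i) ^ ((n : ℤ) + 1) = P i * (P i) ^ (n : ℤ) := by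
        rw [zpow_add_one, ((Commute.refl (P i)).zpow_left n).eq]
      rw [h1, MulAut.mul_apply, ih, _root_.map_mul, _root_.map_mul, _root_.map_zpow,
        hP i, P_last hP' i]
      group
  | pred n ih =>
      have h1 : (P i) ^ (-(n : ℤ) - 1) = (P i)⁻¹ * (P i) ^ (-(n : ℤ)) := by
        rw [zpow_sub_one, (((Commute.refl (P i)).zpow_left (-(n : ℤ))).inv_right).eq]
      rw [h1, MulAut.mul_apply, ih, _root_.map_mul, _root_.map_mul, _root_.map_zpow,
        Pinv_conj hP hP' i, Pinv_fix hP' i _ (Fin.castSucc_lt_last i).ne']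
      group

lemma prod_last (c : Fin m → ℤ) (s : Finset (Fin m))
    (hc : (s : Set (Fin m)).Pairwise fun a b => Commute ((P a) ^ (c a)) ((P b) ^ (c b))) :
    (s.noncommProd (fun i => (P i) ^ (c i)) hc) (FreeGroup.of (Fin.last m)) =
      FreeGroup.of (Fin.last m) := by
  classical
  induction s using Finset.induction_on with
  | empty => simp
  | @insert a s ha ih =>
      rw [Finset.noncommProd_insert_of_notMem _ _ _ _ ha, MulAut.mul_apply,
        ih (hc.mono (by simp [Finset.subset_insert])),
        Pzpow_fix hP hP' a _ _ (Fin.castSucc_lt_last a).ne']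

lemma prod_castSucc (c : Fin m → ℤ) (s : Finset (Fin m))
    (hc : (s : Set (Fin m)).Pairwise fun a b => Commute ((P a) ^ (c a)) ((P b) ^ (c b)))
    (j : Fin m) :
    (s.noncommProd (fun i => (P i) ^ (c i)) hc) (FreeGroup.of (Fin.castSucc j)) =
      if j ∈ s then
        (FreeGroup.of (Fin.last m)) ^ (c j) * FreeGroup.of (Fin.castSucc j) *
          (FreeGroup.of (Fin.last m)) ^ (c j)
      else FreeGroup.of (Fin.castSucc j) := by
  classical
  induction s using Finset.induction_on with
  | empty => simp
  | @insert a s ha ih =>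
      rw [Finset.noncommProd_insert_of_notMem _ _ _ _ ha, MulAut.mul_apply,
        ih (hc.mono (by simp [Finset.subset_insert]))]
      rcases eq_or_ne j a with rfl | hja
      · rw [if_neg ha, if_pos (Finset.mem_insert_self j s), Pzpow_conj hP hP' j (c j)]
      · rcases em (j ∈ s) with hjs | hjs
        · rw [if_pos hjs, if_pos (Finset.mem_insert_of_mem hjs), _root_.map_mul,
            _root_.map_mul, _root_.map_zpow,
            Pzpow_fix hP hP' a _ _ (Fin.castSucc_lt_last a).ne',
            Pzpow_fix hP hP' a _ _ (by simpa [Fin.castSucc_inj] using hja)]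
        · rw [if_neg hjs, if_neg (by simp [hja, hjs]),
            Pzpow_fix hP hP' a _ _ (by simpa [Fin.castSucc_inj] using hja)]

end Aux

/-- The subgroup of `Aut(F_n)` (here `n = m + 1` with `m ≥ 1`, so `n ≥ 2`)
generated by the `n - 1 = m` elementary palindromic automorphisms `(a_i||a_n)`,
`i = 1, …, n-1`, is free abelian of rank `n - 1 = m`. -/
theorem closure_of_elementary_palindromic_is_free_abelian (m : ℕ) (hm : 1 ≤ m)
    (P : Fin m → MulAut (FreeGroup (Fin (m + 1))))
    (hP : ∀ i : Fin m,
      P i (FreeGroup.of (Fin.castSucc i)) =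
        FreeGroup.of (Fin.last m) * FreeGroup.of (Fin.castSucc i) * FreeGroup.of (Fin.last m))
    (hP' : ∀ (i : Fin m) (k : Fin (m + 1)), k ≠ Fin.castSucc i →
      P i (FreeGroup.of k) = FreeGroup.of k) :
    Nonempty ((Subgroup.closure (Set.range P)) ≃* Multiplicative (Fin m → ℤ)) := by
  classical
  set G := FreeGroup (Fin (m + 1))
  have hcomm : Pairwise fun i j => ∀ (x y : Multiplicative ℤ),
      Commute (zpowersHom (MulAut G) (P i) x) (zpowersHom (MulAut G) (P j) y) := by
    intro i j _ x y
    simpa using (P_comm hP hP' i j).zpow_zpow _ _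
  set Φ0 : (∀ _ : Fin m, Multiplicative ℤ) →* MulAut G :=
    MonoidHom.noncommPiCoprod (fun i => zpowersHom (MulAut G) (P i)) hcomm with hΦ0
  have hinj : Function.Injective Φ0 := by
    rw [injective_iff_map_eq_one]
    intro c hc
    funext j
    have hev := congrArg (fun (f : MulAut G) => f (FreeGroup.of (Fin.castSucc j))) hc
    rw [MonoidHom.noncommPiCoprod_apply] at hev
    simp only [zpowersHom_apply, MulAut.one_apply] at hev
    rw [prod_castSucc hP hP' (fun i => Multiplicative.toAdd (c i)) Finset.univ _ j,
      if_pos (Finset.mem_univ j)] at hev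
    set f : G →* Multiplicative ℤ :=
      FreeGroup.lift (fun x => if x = Fin.last m then Multiplicative.ofAdd (1 : ℤ) else 1)
      with hf
    have hf1 : f (FreeGroup.of (Fin.last m)) = Multiplicative.ofAdd (1 : ℤ) := by
      rw [hf, FreeGroup.lift_apply_of, if_pos rfl]
    have hf2 : f (FreeGroup.of (Fin.castSucc j)) = 1 := by
      rw [hf, FreeGroup.lift_apply_of, if_neg (Fin.castSucc_lt_last j).ne]
    have key := congrArg f hev
    rw [_root_.map_mul, _root_.map_mul, _root_.map_zpow, hf1, hf2] at key
    have h2 := congrArg Multiplicative.toAdd key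
    simp only [toAdd_mul, toAdd_zpow, toAdd_ofAdd, toAdd_one, smul_eq_mul, mul_one,
      add_zero, zero_add] at h2
    have h3 : Multiplicative.toAdd (c j) = 0 := by omega
    exact toAdd_eq_zero.mp h3
  have hrange : Φ0.range = Subgroup.closure (Set.range P) := by
    rw [hΦ0, MonoidHom.noncommPiCoprod_range]
    apply le_antisymm
    · refine iSup_le fun i => ?_
      rw [Subgroup.range_zpowersHom, Subgroup.zpowers_le]
      exact Subgroup.subset_closure ⟨i, rfl⟩
    · rw [Subgroup.closure_le]
      rintro _ ⟨i, rfl⟩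
      exact Subgroup.mem_iSup_of_mem i
        (by rw [Subgroup.range_zpowersHom]; exact Subgroup.mem_zpowers _)
  have e1 : (∀ _ : Fin m, Multiplicative ℤ) ≃* Φ0.range := MonoidHom.ofInjective hinj
  have e2 : Φ0.range ≃* Subgroup.closure (Set.range P) := MulEquiv.subgroupCongr hrange
  have e3 : Multiplicative (Fin m → ℤ) ≃* (∀ _ : Fin m, Multiplicative ℤ) :=
    MulEquiv.piMultiplicative fun _ => ℤ
  exact ⟨(e2.symm.trans e1.symm).trans e3.symm⟩
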